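/- Let p be a prime, let k ≥ 1 and j ≥ 0 be integers, and let r be an integer with 1 ≤ r ≤ p-1. If d_k(pn+r) ≡ 0 (mod p) for all integers n ≥ 0, then d_{pj+k}(pn+r) ≡ 0 (mod p) for all integers n ≥ 0. -/

import Mathlib

open PowerSeries Finset

/-- `elongatedDiamond k n` (written `d_k(n)` in the paper) is the coefficient of `q^n` in the
formal power series `∏_{i ≥ 1} (1 - q^(2i))^k / ∏_{i ≥ 1} (1 - q^i)^(3k+1)`.
Since every factor with index `i > n` is congruent to `1` modulo `q^(n+1)`, this coefficient
equals the coefficient of `q^n` in the finite product over `1 ≤ i ≤ n`. -/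
noncomputable def elongatedDiamond (k n : ℕ) : ℤ :=
  PowerSeries.coeff (R := ℤ) n
    (∏ i ∈ Finset.Icc 1 n,
      ((1 - (PowerSeries.X : PowerSeries ℤ) ^ (2 * i)) ^ k *
        (PowerSeries.invOfUnit (1 - (PowerSeries.X : PowerSeries ℤ) ^ i) 1) ^ (3 * k + 1)))

section Aux
variable {R : Type*} [CommRing R]

noncomputable def dA (R : Type*) [CommRing R] (i : ℕ) : PowerSeries R :=
  1 - (PowerSeries.X : PowerSeries R) ^ (2 * i)

noncomputable def dB (R : Type*) [CommRing R] (i : ℕ) : PowerSeries R :=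
  PowerSeries.invOfUnit (1 - (PowerSeries.X : PowerSeries R) ^ i) 1

noncomputable def dProd (R : Type*) [CommRing R] (k N : ℕ) : PowerSeries R :=
  ∏ i ∈ Finset.Icc 1 N, (dA R i ^ k * dB R i ^ (3 * k + 1))

lemma elongatedDiamond_eq (k n : ℕ) :
    elongatedDiamond k n = PowerSeries.coeff (R := ℤ) n (dProd ℤ k n) := rfl

lemma constCoeff_aux (i : ℕ) (hi : 1 ≤ i) :
    PowerSeries.constantCoeff (R := R) (1 - (PowerSeries.X : PowerSeries R) ^ i) = (1 : Rˣ) := by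
  simp [zero_pow (by omega : i ≠ 0)]

lemma dB_mul (i : ℕ) (hi : 1 ≤ i) :
    (1 - (PowerSeries.X : PowerSeries R) ^ i) * dB R i = 1 :=
  PowerSeries.mul_invOfUnit _ 1 (constCoeff_aux i hi)

lemma X_dvd_dB_sub_one (i : ℕ) (hi : 1 ≤ i) :
    (PowerSeries.X : PowerSeries R) ^ i ∣ dB R i - 1 := by
  have h := dB_mul (R := R) i hi
  have heq : dB R i - 1 = X ^ i * dB R i := by
    linear_combination h
  rw [heq]
  exact Dvd.intro _ rfl

lemma X_dvd_dA_sub_one (i : ℕ) :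
    (PowerSeries.X : PowerSeries R) ^ i ∣ dA R i - 1 := by
  have : dA R i - 1 = -(X ^ i * X ^ i) := by
    rw [dA, ← pow_add]; ring_nf
  rw [this]
  exact (Dvd.intro _ rfl).neg_right

lemma dvd_mul_sub_one {m : ℕ} {a b : PowerSeries R}
    (ha : (X : PowerSeries R) ^ m ∣ a - 1) (hb : (X : PowerSeries R) ^ m ∣ b - 1) :
    (X : PowerSeries R) ^ m ∣ a * b - 1 := by
  have : a * b - 1 = a * (b - 1) + (a - 1) := by ring
  rw [this]
  exact dvd_add (hb.mul_left a) ha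

lemma dvd_pow_sub_one {m : ℕ} {a : PowerSeries R} (ha : (X : PowerSeries R) ^ m ∣ a - 1)
    (k : ℕ) : (X : PowerSeries R) ^ m ∣ a ^ k - 1 := by
  have := sub_dvd_pow_sub_pow a 1 k
  rw [one_pow] at this
  exact dvd_trans ha this

lemma dvd_prod_sub_one {m : ℕ} {s : Finset ℕ} {f : ℕ → PowerSeries R}
    (hf : ∀ i ∈ s, (X : PowerSeries R) ^ m ∣ f i - 1) :
    (X : PowerSeries R) ^ m ∣ (∏ i ∈ s, f i) - 1 := by
  classical
  induction s using Finset.induction with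
  | empty => simp
  | insert _ _ hx ih =>
    rw [Finset.prod_insert hx]
    exact dvd_mul_sub_one (hf _ (Finset.mem_insert_self _ _))
      (ih fun i hi => hf i (Finset.mem_insert_of_mem hi))

lemma factor_sub_one {m i k : ℕ} (him : m ≤ i) (hi : 1 ≤ i) :
    (X : PowerSeries R) ^ m ∣ dA R i ^ k * dB R i ^ (3 * k + 1) - 1 := by
  have hXi : (X : PowerSeries R) ^ m ∣ (X : PowerSeries R) ^ i := pow_dvd_pow _ him
  exact dvd_mul_sub_one
    (dvd_pow_sub_one (hXi.trans (X_dvd_dA_sub_one i)) k)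
    (dvd_pow_sub_one (hXi.trans (X_dvd_dB_sub_one i hi)) _)

lemma coeff_dProd_stable (k n N : ℕ) (hnN : n ≤ N) :
    PowerSeries.coeff (R := R) n (dProd R k N) = PowerSeries.coeff (R := R) n (dProd R k n) := by
  have hsplit : dProd R k N = dProd R k n *
      ∏ i ∈ Finset.Ioc n N, (dA R i ^ k * dB R i ^ (3 * k + 1)) := by
    rw [dProd, dProd, show Finset.Icc 1 N = Finset.Ioc 0 N from rfl,
      show Finset.Icc 1 n = Finset.Ioc 0 n from rfl,
      Finset.prod_Ioc_consecutive _ (Nat.zero_le n) hnN]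
  set u := ∏ i ∈ Finset.Ioc n N, (dA R i ^ k * dB R i ^ (3 * k + 1)) with hu
  have hdvd : (X : PowerSeries R) ^ (n + 1) ∣ u - 1 := by
    refine dvd_prod_sub_one fun i hi => ?_
    rw [Finset.mem_Ioc] at hi
    exact factor_sub_one (by omega) (by omega)
  have : dProd R k N = dProd R k n + dProd R k n * (u - 1) := by
    rw [hsplit]; ring
  rw [this, map_add, add_eq_left]
  have : (X : PowerSeries R) ^ (n + 1) ∣ dProd R k n * (u - 1) := hdvd.mul_left _
  exact PowerSeries.X_pow_dvd_iff.mp this n (Nat.lt_succ_self n)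

lemma map_dB (φ : ℤ →+* R) (i : ℕ) (hi : 1 ≤ i) :
    PowerSeries.map φ (dB ℤ i) = dB R i := by
  have h1 : (1 - (PowerSeries.X : PowerSeries R) ^ i) * PowerSeries.map φ (dB ℤ i) = 1 := by
    have : PowerSeries.map φ (1 - (PowerSeries.X : PowerSeries ℤ) ^ i) =
        1 - (PowerSeries.X : PowerSeries R) ^ i := by
      simp
    rw [← this, ← map_mul, dB_mul i hi, map_one]
  have h2 := dB_mul (R := R) i hi
  calc PowerSeries.map φ (dB ℤ i)
      = ((1 - (X : PowerSeries R) ^ i) * dB R i) * PowerSeries.map φ (dB ℤ i) := by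
        rw [h2, one_mul]
    _ = ((1 - (X : PowerSeries R) ^ i) * PowerSeries.map φ (dB ℤ i)) * dB R i := by ring
    _ = dB R i := by rw [h1, one_mul]

lemma map_dProd (φ : ℤ →+* R) (k N : ℕ) :
    PowerSeries.map φ (dProd ℤ k N) = dProd R k N := by
  rw [dProd, dProd, map_prod]
  refine Finset.prod_congr rfl fun i hi => ?_
  rw [Finset.mem_Icc] at hi
  rw [map_mul, map_pow, map_pow, map_dB φ i hi.1]
  congr 2
  simp [dA]

lemma dProd_split (k j' N : ℕ) :
    dProd R (j' + k) N = dProd R k N * (∏ i ∈ Finset.Icc 1 N, (dA R i * dB R i ^ 3)) ^ j' := by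
  rw [dProd, dProd, ← Finset.prod_pow, ← Finset.prod_mul_distrib]
  refine Finset.prod_congr rfl fun i _ => ?_
  ring

end Aux

section Frob

lemma coeff_pow_prime_eq_zero (p : ℕ) [hFp : Fact p.Prime] (g : PowerSeries (ZMod p))
    (m : ℕ) (hm : ¬ p ∣ m) : PowerSeries.coeff (R := (ZMod p)) m (g ^ p) = 0 := by
  set t := PowerSeries.trunc (m + 1) g with ht
  have hdvd : (X : PowerSeries (ZMod p)) ^ (m + 1) ∣ g - (t : PowerSeries (ZMod p)) := by
    rw [PowerSeries.X_pow_dvd_iff]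
    intro l hl
    rw [map_sub, Polynomial.coeff_coe, PowerSeries.coeff_trunc, if_pos hl, sub_self]
  have hdvd2 : (X : PowerSeries (ZMod p)) ^ (m + 1) ∣ g ^ p - (t : PowerSeries (ZMod p)) ^ p :=
    hdvd.trans (sub_dvd_pow_sub_pow _ _ p)
  have hzero : PowerSeries.coeff (R := (ZMod p)) m (g ^ p - (t : PowerSeries (ZMod p)) ^ p) = 0 :=
    PowerSeries.X_pow_dvd_iff.mp hdvd2 m (Nat.lt_succ_self m)
  rw [map_sub, sub_eq_zero] at hzero
  rw [hzero, ← Polynomial.coe_pow]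
  have hexp : t ^ p = Polynomial.expand (ZMod p) p t := by
    have := Polynomial.map_frobenius_expand (R := ZMod p) (p := p) t
    rw [ZMod.frobenius_zmod, Polynomial.map_id] at this
    exact this.symm
  rw [hexp, Polynomial.coeff_coe, Polynomial.coeff_expand hFp.out.pos, if_neg hm]

end Frob

theorem d_lift (p : ℕ) (hp : Nat.Prime p) (k : ℕ) (hk : 1 ≤ k) (j : ℕ) (r : ℕ)
    (hr1 : 1 ≤ r) (hr2 : r ≤ p - 1)
    (h : ∀ n : ℕ, (p : ℤ) ∣ elongatedDiamond k (p * n + r)) :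
    ∀ n : ℕ, (p : ℤ) ∣ elongatedDiamond (p * j + k) (p * n + r) := by
  haveI : Fact p.Prime := ⟨hp⟩
  intro n
  set N := p * n + r with hN
  rw [← ZMod.intCast_zmod_eq_zero_iff_dvd, elongatedDiamond_eq]
  have hmap : ((PowerSeries.coeff (R := ℤ) N (dProd ℤ (p * j + k) N) : ℤ) : ZMod p) =
      PowerSeries.coeff (R := (ZMod p)) N (dProd (ZMod p) (p * j + k) N) := by
    rw [← map_dProd (Int.castRingHom (ZMod p)), PowerSeries.coeff_map]
    rfl
  rw [hmap, dProd_split k (p * j) N]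
  set g := ∏ i ∈ Finset.Icc 1 N, (dA (ZMod p) i * dB (ZMod p) i ^ 3) with hg
  have hgp : g ^ (p * j) = (g ^ j) ^ p := by
    rw [← pow_mul, mul_comm]
  rw [hgp, PowerSeries.coeff_mul]
  refine Finset.sum_eq_zero fun x hx => ?_
  rw [Finset.HasAntidiagonal.mem_antidiagonal] at hx
  by_cases hb : p ∣ x.2
  · obtain ⟨m, hm⟩ := hb
    have hple : 2 ≤ p := hp.two_le
    have hmn : m ≤ n := by
      by_contra hc
      push_neg at hc
      have h2 : p * (n + 1) ≤ p * m := Nat.mul_le_mul_left p hc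
      have h3 : p * (n + 1) = p * n + p := by ring
      omega
    have hx1 : x.1 = p * (n - m) + r := by
      have h1 : p * n = p * (n - m) + p * m := by
        rw [← Nat.mul_add, Nat.sub_add_cancel hmn]
      omega
    have hcoeff : PowerSeries.coeff (R := (ZMod p)) x.1 (dProd (ZMod p) k N) = 0 := by
      rw [coeff_dProd_stable k x.1 N (by omega)]
      rw [← map_dProd (Int.castRingHom (ZMod p)), PowerSeries.coeff_map]
      have := h (n - m)
      rw [elongatedDiamond_eq, ← hx1] at this
      rw [← ZMod.intCast_zmod_eq_zero_iff_dvd] at this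
      exact this
    rw [hcoeff, zero_mul]
  · rw [coeff_pow_prime_eq_zero p (g ^ j) x.2 hb, mul_zero]
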